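/- Let R be an additive commutative monoid, m a natural number, n = 2^m, and v : ZMod n → R. Define the rotate-and-add folding sequence by w₀ = v and, for 0 ≤ s < m, w_{s+1}(i) = w_s(i) + w_s(i + n/2^{s+1}). Then for every index i, w_m(i) = Σ_{j} v(j); in particular the first entry of the fully folded vector equals the sum of all entries of v. -/

import Mathlib

private lemma even_odd_split {R : Type*} [AddCommMonoid R] (f : ℕ → R) (n : ℕ) :
    ∑ k ∈ Finset.range (2 * n), f k
      = ∑ k ∈ Finset.range n, f (2 * k) + ∑ k ∈ Finset.range n, f (2 * k + 1) := by
  induction n with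
  | zero => simp
  | succ n ih =>
    have : 2 * (n + 1) = (2 * n) + 1 + 1 := by ring
    rw [this, Finset.sum_range_succ, Finset.sum_range_succ, ih,
      Finset.sum_range_succ, Finset.sum_range_succ]
    abel

theorem rotate_and_add_fold {R : Type*} [AddCommMonoid R] (m : ℕ)
    (v : ZMod (2 ^ m) → R) (W : ℕ → ZMod (2 ^ m) → R)
    (hW0 : W 0 = v)
    (hWs : ∀ s < m, ∀ i : ZMod (2 ^ m),
      W (s + 1) i = W s i + W s (i + ((2 ^ m / 2 ^ (s + 1) : ℕ) : ZMod (2 ^ m)))) :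
    ∀ i : ZMod (2 ^ m), W m i = ∑ j : ZMod (2 ^ m), v j := by
  have key : ∀ s ≤ m, ∀ i : ZMod (2 ^ m),
      W s i = ∑ k ∈ Finset.range (2 ^ s), v (i + ((k * 2 ^ (m - s) : ℕ) : ZMod (2 ^ m))) := by
    intro s
    induction s with
    | zero => intro _ i; simp [hW0]
    | succ s ih =>
      intro hs i
      have hsm : s < m := lt_of_lt_of_le (Nat.lt_succ_self s) hs
      have hdiv : 2 ^ m / 2 ^ (s + 1) = 2 ^ (m - (s + 1)) := Nat.pow_div hs (by norm_num)
      rw [hWs s hsm i, ih (le_of_lt hsm) i, ih (le_of_lt hsm), hdiv]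
      have h2 : (2 : ℕ) ^ (s + 1) = 2 * 2 ^ s := by ring
      rw [h2, even_odd_split]
      congr 1
      · apply Finset.sum_congr rfl
        intro k _
        congr 2
        have : 2 * k * 2 ^ (m - (s + 1)) = k * 2 ^ (m - s) := by
          rw [show m - s = (m - (s + 1)) + 1 from by omega]; ring
        rw [this]
      · apply Finset.sum_congr rfl
        intro k _
        congr 1
        have : (2 * k + 1) * 2 ^ (m - (s + 1)) = 2 ^ (m - (s + 1)) + k * 2 ^ (m - s) := by
          rw [show m - s = (m - (s + 1)) + 1 from by omega]; ring
        rw [this]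
        push_cast
        ring
  intro i
  rw [key m le_rfl i]
  simp only [Nat.sub_self, pow_zero, mul_one]
  have hpos : 0 < 2 ^ m := Nat.pow_pos (n := m) (by norm_num)
  haveI : NeZero (2 ^ m) := ⟨hpos.ne'⟩
  calc ∑ k ∈ Finset.range (2 ^ m), v (i + (k : ZMod (2 ^ m)))
      = ∑ j : ZMod (2 ^ m), v (i + j) := by
        refine Finset.sum_nbij' (fun k => ((k : ℕ) : ZMod (2 ^ m))) (fun z => z.val)
          ?_ ?_ ?_ ?_ ?_
        · intro a _; exact Finset.mem_univ _
        · intro a _; exact Finset.mem_range.mpr (ZMod.val_lt a)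
        · intro a ha; exact ZMod.val_cast_of_lt (Finset.mem_range.mp ha)
        · intro a _; exact ZMod.natCast_zmod_val a
        · intro a _; rfl
    _ = ∑ j : ZMod (2 ^ m), v j := Fintype.sum_equiv (Equiv.addLeft i) _ _ (by simp)
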